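/- arXiv:2602.14536 — 2 statements merged into one kernel-verified Lean document; each statement's English description precedes it below -/
import Mathlib

section
/- Strict alignment improvement under incoherent noise: in the setting of the exact alignment-gain formula, if additionally 0 < ε < 1, α + β < 1, g_core ≠ 0, and ⟨g_core, g_noise⟩_{M^{-1}} ≤ ζ ‖g_core‖²_{M^{-1}} for some ζ < 1, then A_fil − A_train ≥ (ab(1−α−β)(1−ζ)/Z_fil) ‖g_core‖²_{M^{-1}} > 0. -/
open Matrix

/-- Strict alignment improvement under incoherent noise: if `0 < ε < 1`,
`α + β < 1`, `g_core ≠ 0`, and `⟨g_core,g_noise⟩_{M⁻¹} ≤ ζ ‖g_core‖²_{M⁻¹}`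
with `ζ < 1`, then
`A_fil − A_train ≥ (ab(1−α−β)(1−ζ)/Z_fil) ‖g_core‖²_{M⁻¹} > 0`. -/
theorem strict_alignment_improvement {d : ℕ} (M : Matrix (Fin d) (Fin d) ℝ)
    (hM : M.PosDef) (gcore gnoise : Fin d → ℝ)
    (ε α β ζ : ℝ) (hε0 : 0 < ε) (hε1 : ε < 1) (hα0 : 0 ≤ α) (hα1 : α ≤ 1)
    (hβ0 : 0 ≤ β) (hβ1 : β ≤ 1) (hαβ : α + β < 1) (hζ : ζ < 1)
    (hgcore : gcore ≠ 0)
    (hcoh : gcore ⬝ᵥ M⁻¹ *ᵥ gnoise ≤ ζ * (gcore ⬝ᵥ M⁻¹ *ᵥ gcore))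
    (a b : ℝ) (ha : a = 1 - ε) (hb : b = ε)
    (Zfil : ℝ) (hZfil : Zfil = a * (1 - α) + b * β) (hZpos : 0 < Zfil)
    (Atrain Afil : ℝ)
    (hAtrain : Atrain = a * (gcore ⬝ᵥ M⁻¹ *ᵥ gcore) + b * (gcore ⬝ᵥ M⁻¹ *ᵥ gnoise))
    (hAfil : Afil = (a * (1 - α) / Zfil) * (gcore ⬝ᵥ M⁻¹ *ᵥ gcore)
      + (b * β / Zfil) * (gcore ⬝ᵥ M⁻¹ *ᵥ gnoise)) :
    (a * b * (1 - α - β) * (1 - ζ) / Zfil) * (gcore ⬝ᵥ M⁻¹ *ᵥ gcore) ≤ Afil - Atrain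
      ∧ 0 < (a * b * (1 - α - β) * (1 - ζ) / Zfil) * (gcore ⬝ᵥ M⁻¹ *ᵥ gcore) := by
  have hQpos : 0 < gcore ⬝ᵥ M⁻¹ *ᵥ gcore := by
    have := (hM.inv).dotProduct_mulVec_pos hgcore
    simpa using this
  set Q := gcore ⬝ᵥ M⁻¹ *ᵥ gcore with hQ
  set P := gcore ⬝ᵥ M⁻¹ *ᵥ gnoise with hP
  have hZne : Zfil ≠ 0 := ne_of_gt hZpos
  have hdiff : Afil - Atrain = (a * b * (1 - α - β) / Zfil) * (Q - P) := by
    subst hAtrain hAfil ha hb hZfil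
    field_simp
    ring
  have ha' : 0 < a := by rw [ha]; linarith
  have hb' : 0 < b := by rw [hb]; linarith
  have hab' : 0 < 1 - α - β := by linarith
  have hζ' : 0 < 1 - ζ := by linarith
  have hcpos : 0 < a * b * (1 - α - β) / Zfil :=
    div_pos (mul_pos (mul_pos ha' hb') hab') hZpos
  constructor
  · rw [hdiff]
    have h1 : (1 - ζ) * Q ≤ Q - P := by nlinarith
    calc a * b * (1 - α - β) * (1 - ζ) / Zfil * Q
        = (a * b * (1 - α - β) / Zfil) * ((1 - ζ) * Q) := by ring
      _ ≤ (a * b * (1 - α - β) / Zfil) * (Q - P) := by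
          exact mul_le_mul_of_nonneg_left h1 (le_of_lt hcpos)
  · have : 0 < a * b * (1 - α - β) * (1 - ζ) / Zfil :=
      div_pos (mul_pos (mul_pos (mul_pos ha' hb') hab') hζ') hZpos
    positivity
end

section
/- Robust alignment gain under bounded selection bias: with a = 1−ε, b = ε, Z_fil = a(1−α)+bβ > 0, suppose g_core^sel and g_noise^sel satisfy ‖g_core^sel − g_core‖_{M^{-1}} ≤ ρ_c‖g_core‖_{M^{-1}} and ‖g_noise^sel − g_noise‖_{M^{-1}} ≤ ρ_n‖g_core‖_{M^{-1}}, and ⟨g_core, g_noise⟩_{M^{-1}} ≤ ζ‖g_core‖²_{M^{-1}} with ζ < 1. Define A_fil^sel = (a(1−α)⟨g_core, g_core^sel⟩_{M^{-1}} + bβ⟨g_core, g_noise^sel⟩_{M^{-1}})/Z_fil and A_train = a‖g_core‖²_{M^{-1}} + b⟨g_core,g_noise⟩_{M^{-1}}. Then A_fil^sel − A_train ≥ [ab(1−α−β)(1−ζ) − a(1−α)ρ_c − bβρ_n] / Z_fil · ‖g_core‖²_{M^{-1}}. -/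
open Matrix

lemma cs_aux {d : ℕ} {N : Matrix (Fin d) (Fin d) ℝ} (hN : N.PosSemidef)
    (x y : Fin d → ℝ) :
    -(Real.sqrt (x ⬝ᵥ N *ᵥ x) * Real.sqrt (y ⬝ᵥ N *ᵥ y)) ≤ x ⬝ᵥ N *ᵥ y := by
  have hsymm : ∀ u v : Fin d → ℝ, u ⬝ᵥ N *ᵥ v = v ⬝ᵥ N *ᵥ u := by
    intro u v
    have hNT : Nᵀ = N := by
      have := hN.isHermitian
      simpa [Matrix.IsHermitian, Matrix.conjTranspose_eq_transpose_of_trivial] using this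
    rw [Matrix.dotProduct_mulVec, ← Matrix.mulVec_transpose, hNT,
      dotProduct_comm]
  have hkey : ∀ t : ℝ, 0 ≤ (y ⬝ᵥ N *ᵥ y) * t ^ 2 + (2 * (x ⬝ᵥ N *ᵥ y)) * t + x ⬝ᵥ N *ᵥ x := by
    intro t
    have h0 : 0 ≤ (x + t • y) ⬝ᵥ N *ᵥ (x + t • y) := by simpa using hN.dotProduct_mulVec_nonneg (x + t • y)
    have hexp : (x + t • y) ⬝ᵥ N *ᵥ (x + t • y)
        = (y ⬝ᵥ N *ᵥ y) * t ^ 2 + (2 * (x ⬝ᵥ N *ᵥ y)) * t + x ⬝ᵥ N *ᵥ x := by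
      have h1 := hsymm y x
      simp [Matrix.mulVec_add, dotProduct_add, add_dotProduct,
        Matrix.mulVec_smul, dotProduct_smul, smul_dotProduct,
        smul_eq_mul, h1]
      ring
    simpa [hexp] using h0
  have hd : discrim (y ⬝ᵥ N *ᵥ y) (2 * (x ⬝ᵥ N *ᵥ y)) (x ⬝ᵥ N *ᵥ x) ≤ 0 := by
    apply discrim_le_zero
    intro t
    have := hkey t
    nlinarith [this]
  rw [discrim] at hd
  have hsq : (x ⬝ᵥ N *ᵥ y) ^ 2 ≤ (x ⬝ᵥ N *ᵥ x) * (y ⬝ᵥ N *ᵥ y) := by nlinarith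
  have habs : |x ⬝ᵥ N *ᵥ y| ≤ Real.sqrt (x ⬝ᵥ N *ᵥ x) * Real.sqrt (y ⬝ᵥ N *ᵥ y) := by
    have hx : 0 ≤ x ⬝ᵥ N *ᵥ x := by simpa using hN.dotProduct_mulVec_nonneg x
    rw [← Real.sqrt_mul hx]
    calc |x ⬝ᵥ N *ᵥ y| = Real.sqrt ((x ⬝ᵥ N *ᵥ y) ^ 2) := (Real.sqrt_sq_eq_abs _).symm
      _ ≤ _ := Real.sqrt_le_sqrt hsq
  linarith [neg_abs_le (x ⬝ᵥ N *ᵥ y)]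

set_option maxHeartbeats 1000000 in
/-- Robust alignment gain under bounded selection bias. -/
theorem robust_alignment_gain {d : ℕ} (M : Matrix (Fin d) (Fin d) ℝ)
    (hM : M.PosDef) (gcore gnoise gcoreSel gnoiseSel : Fin d → ℝ)
    (ε α β ζ ρc ρn : ℝ) (hε0 : 0 < ε) (hε1 : ε < 1)
    (hα0 : 0 ≤ α) (hα1 : α ≤ 1) (hβ0 : 0 ≤ β) (hβ1 : β ≤ 1) (hαβ : α + β < 1)
    (hζ : ζ < 1) (hρc : 0 ≤ ρc) (hρn : 0 ≤ ρn)
    (a b : ℝ) (ha : a = 1 - ε) (hb : b = ε)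
    (Zfil : ℝ) (hZfil : Zfil = a * (1 - α) + b * β) (hZpos : 0 < Zfil)
    (hbiasC : Real.sqrt ((gcoreSel - gcore) ⬝ᵥ M⁻¹ *ᵥ (gcoreSel - gcore))
      ≤ ρc * Real.sqrt (gcore ⬝ᵥ M⁻¹ *ᵥ gcore))
    (hbiasN : Real.sqrt ((gnoiseSel - gnoise) ⬝ᵥ M⁻¹ *ᵥ (gnoiseSel - gnoise))
      ≤ ρn * Real.sqrt (gcore ⬝ᵥ M⁻¹ *ᵥ gcore))
    (hcoh : gcore ⬝ᵥ M⁻¹ *ᵥ gnoise ≤ ζ * (gcore ⬝ᵥ M⁻¹ *ᵥ gcore))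
    (Atrain AfilSel : ℝ)
    (hAtrain : Atrain = a * (gcore ⬝ᵥ M⁻¹ *ᵥ gcore) + b * (gcore ⬝ᵥ M⁻¹ *ᵥ gnoise))
    (hAfilSel : AfilSel = (a * (1 - α) * (gcore ⬝ᵥ M⁻¹ *ᵥ gcoreSel)
      + b * β * (gcore ⬝ᵥ M⁻¹ *ᵥ gnoiseSel)) / Zfil) :
    (a * b * (1 - α - β) * (1 - ζ) - a * (1 - α) * ρc - b * β * ρn) / Zfil
        * (gcore ⬝ᵥ M⁻¹ *ᵥ gcore)
      ≤ AfilSel - Atrain := by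
  have hNsd : (M⁻¹).PosSemidef := hM.inv.posSemidef
  set c := gcore ⬝ᵥ M⁻¹ *ᵥ gcore with hc
  have hc0 : 0 ≤ c := by simpa [hc] using hNsd.dotProduct_mulVec_nonneg gcore
  have hsc : Real.sqrt c * Real.sqrt c = c := Real.mul_self_sqrt hc0
  -- deviation bound for core
  have hdevC : -(ρc * c) ≤ gcore ⬝ᵥ M⁻¹ *ᵥ (gcoreSel - gcore) := by
    have h1 := cs_aux hNsd gcore (gcoreSel - gcore)
    have h2 : Real.sqrt c * Real.sqrt ((gcoreSel - gcore) ⬝ᵥ M⁻¹ *ᵥ (gcoreSel - gcore))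
        ≤ Real.sqrt c * (ρc * Real.sqrt c) :=
      mul_le_mul_of_nonneg_left hbiasC (Real.sqrt_nonneg c)
    nlinarith [Real.sqrt_nonneg c]
  have hdevN : -(ρn * c) ≤ gcore ⬝ᵥ M⁻¹ *ᵥ (gnoiseSel - gnoise) := by
    have h1 := cs_aux hNsd gcore (gnoiseSel - gnoise)
    have h2 : Real.sqrt c * Real.sqrt ((gnoiseSel - gnoise) ⬝ᵥ M⁻¹ *ᵥ (gnoiseSel - gnoise))
        ≤ Real.sqrt c * (ρn * Real.sqrt c) :=
      mul_le_mul_of_nonneg_left hbiasN (Real.sqrt_nonneg c)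
    nlinarith [Real.sqrt_nonneg c]
  have hsplitC : gcore ⬝ᵥ M⁻¹ *ᵥ (gcoreSel - gcore)
      = gcore ⬝ᵥ M⁻¹ *ᵥ gcoreSel - c := by
    simp [Matrix.mulVec_sub, dotProduct_sub, hc]
  have hsplitN : gcore ⬝ᵥ M⁻¹ *ᵥ (gnoiseSel - gnoise)
      = gcore ⬝ᵥ M⁻¹ *ᵥ gnoiseSel - gcore ⬝ᵥ M⁻¹ *ᵥ gnoise := by
    simp [Matrix.mulVec_sub, dotProduct_sub]
  rw [hsplitC] at hdevC
  rw [hsplitN] at hdevN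
  set qc := gcore ⬝ᵥ M⁻¹ *ᵥ gcoreSel
  set qn := gcore ⬝ᵥ M⁻¹ *ᵥ gnoiseSel
  set n := gcore ⬝ᵥ M⁻¹ *ᵥ gnoise
  rw [hAfilSel, hAtrain, div_mul_eq_mul_div, div_sub' (ne_of_gt hZpos),
    div_le_div_iff₀ hZpos hZpos]
  have hab : 0 ≤ a * b * (1 - α - β) := by
    apply mul_nonneg (mul_nonneg (by linarith) (by linarith))
    linarith
  have hkey : a * b * (1 - α - β) * (1 - ζ) * c ≤ a * b * (1 - α - β) * (c - n) := by
    nlinarith [mul_le_mul_of_nonneg_left hcoh hab]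
  have haa : 0 ≤ a * (1 - α) := mul_nonneg (by linarith) (by linarith)
  have hbb : 0 ≤ b * β := mul_nonneg (by linarith) hβ0
  have hC := mul_le_mul_of_nonneg_left hdevC haa
  have hN := mul_le_mul_of_nonneg_left hdevN hbb
  have hba : b = 1 - a := by rw [ha, hb]; ring
  apply mul_le_mul_of_nonneg_right _ (le_of_lt hZpos)
  subst hZfil hba
  nlinarith [hC, hN, hkey]
end
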